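/- Let p be an odd prime and let α ∈ ℤ_p be a p-adic unit such that −α is not a square in ℚ_p. Let A = diag(α, 1) ∈ M₂(ℚ_p). If g ∈ GL(2,ℚ_p) satisfies g · A · gᵀ = det(g) · A, then there exists λ ∈ ℚ_pˣ such that λg has all entries in ℤ_p and det(λg) is a p-adic unit, i.e. λg ∈ GL(2,ℤ_p). (In other words, the stabilizer in PGL(2,ℚ_p) of the point v_α = (α,0,1) of the hyperbolic disc is contained in PGL(2,ℤ_p).) -/

import Mathlib

open Matrix

lemma two_norm (p : ℕ) [Fact p.Prime] (hp : p ≠ 2) : ‖(2 : ℚ_[p])‖ = 1 := by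
  have h := Padic.norm_intCast_lt_one_iff (p := p) (k := 2)
  have h2 : ¬ ((p:ℤ) ∣ 2) := by
    intro hd
    have hd' : p ∣ 2 := by exact_mod_cast hd
    exact hp ((Nat.prime_dvd_prime_iff_eq (Fact.out) Nat.prime_two).mp hd')
  have hle := Padic.norm_int_le_one (p := p) 2
  push_cast at h hle
  rcases lt_or_eq_of_le hle with hlt | heq
  · exact absurd (h.mp hlt) h2
  · exact heq

lemma key (p : ℕ) [Fact p.Prime] (hp : p ≠ 2) (α : ℤ_[p]) (hu : IsUnit α)
    (hns : ¬ IsSquare (-(α : ℚ_[p]))) (x y : ℚ_[p]) :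
    ‖(α : ℚ_[p]) * x^2 + y^2‖ = max ‖x‖ ‖y‖ ^ 2 := by
  have hα : ‖(α : ℚ_[p])‖ = 1 := by
    rw [PadicInt.padic_norm_e_of_padicInt]
    exact PadicInt.isUnit_iff.mp hu
  have hxsq : ‖(α : ℚ_[p]) * x^2‖ = ‖x‖^2 := by
    rw [norm_mul, hα, one_mul, norm_pow]
  have hysq : ‖y^2‖ = ‖y‖^2 := norm_pow _ _
  rcases eq_or_ne ‖x‖ ‖y‖ with heq | hne
  · -- equal norms case
    rcases eq_or_ne x 0 with rfl | hx0
    · have : y = 0 := by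
        rwa [norm_zero, eq_comm, norm_eq_zero] at heq
      subst this; simp
    · -- t = y/x is a unit
      set t : ℚ_[p] := y / x with ht
      have hx : ‖x‖ ≠ 0 := by simpa using hx0
      have htn : ‖t‖ = 1 := by
        rw [ht, norm_div, heq, div_self]
        rwa [heq] at hx
      have htle : ‖t‖ ≤ 1 := le_of_eq htn
      set T : ℤ_[p] := ⟨t, htle⟩ with hT
      -- claim ‖α + t^2‖ = 1
      have hclaim : ‖(α : ℚ_[p]) + t^2‖ = 1 := by
        by_contra hcon
        have hle1 : ‖(α : ℚ_[p]) + t^2‖ ≤ 1 := by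
          refine le_trans (Padic.nonarchimedean _ _) ?_
          rw [norm_pow, htn, one_pow, hα, max_self]
        have hlt : ‖(α : ℚ_[p]) + t^2‖ < 1 := lt_of_le_of_ne hle1 hcon
        -- Hensel
        set F : Polynomial ℤ_[p] := Polynomial.X^2 + Polynomial.C α with hF
        have heval : ‖F.eval T‖ < ‖F.derivative.eval T‖^2 := by
          have hd : F.derivative = Polynomial.C 2 * Polynomial.X := by
            simp [hF, Polynomial.derivative_X_pow]
            rw [map_ofNat, one_add_one_eq_two]
          rw [hd]
          simp only [Polynomial.eval_mul, Polynomial.eval_C, Polynomial.eval_X,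
            Polynomial.eval_add, Polynomial.eval_pow, hF]
          have h2T : ‖(2 : ℤ_[p]) * T‖ = 1 := by
            rw [norm_mul]
            have : ‖(2:ℤ_[p])‖ = 1 := by
              have := two_norm p hp
              rw [← PadicInt.padic_norm_e_of_padicInt]
              exact_mod_cast this
            rw [this, one_mul]
            rw [PadicInt.norm_def]; exact htn
          rw [h2T, one_pow]
          have : ‖T^2 + α‖ = ‖(α:ℚ_[p]) + t^2‖ := by
            rw [PadicInt.norm_def]
            push_cast
            rw [add_comm]
          rw [this]
          exact hlt
        obtain ⟨z, hz, -⟩ := hensels_lemma heval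
        apply hns
        have hz0 : z^2 + α = 0 := by simpa [hF] using hz
        have h2 : ((z^2 + α : ℤ_[p]) : ℚ_[p]) = 0 := by rw [hz0]; simp
        push_cast at h2
        refine ⟨(z : ℚ_[p]), ?_⟩
        have : -(α:ℚ_[p]) = (z:ℚ_[p])^2 := by linear_combination -h2
        rw [this]; ring
      calc ‖(α : ℚ_[p]) * x^2 + y^2‖ = ‖x^2 * ((α:ℚ_[p]) + t^2)‖ := by
            congr 1
            field_simp [ht]
            rw [ht]; field_simp
        _ = ‖x‖^2 := by rw [norm_mul, hclaim, mul_one, norm_pow]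
        _ = max ‖x‖ ‖y‖ ^ 2 := by rw [heq, max_self, ← heq]
  · have hne2 : ‖(α : ℚ_[p]) * x^2‖ ≠ ‖y^2‖ := by
      rw [hxsq, hysq]
      intro h
      apply hne
      have hfac : (‖x‖ - ‖y‖) * (‖x‖ + ‖y‖) = 0 := by nlinarith [h]
      rcases mul_eq_zero.mp hfac with h1 | h1
      · linarith
      · have hx0 : ‖x‖ = 0 := by nlinarith [norm_nonneg x, norm_nonneg y]
        have hy0 : ‖y‖ = 0 := by nlinarith [norm_nonneg x, norm_nonneg y]
        rw [hx0, hy0]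
    rw [Padic.add_eq_max_of_ne hne2, hxsq, hysq]
    rcases max_cases ‖x‖ ‖y‖ with ⟨h1, h2⟩ | ⟨h1, h2⟩ <;> rw [h1]
    · rw [max_eq_left]; nlinarith [norm_nonneg x, norm_nonneg y]
    · rw [max_eq_right]; nlinarith [norm_nonneg x, norm_nonneg y]

theorem stmt_3 (p : ℕ) [Fact p.Prime] (hp : p ≠ 2)
    (α : ℤ_[p]) (hu : IsUnit α) (hns : ¬ IsSquare (-(α : ℚ_[p])))
    (g : Matrix (Fin 2) (Fin 2) ℚ_[p]) (hg : IsUnit g.det)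
    (hstab : g * !![(α : ℚ_[p]), 0; 0, 1] * gᵀ = g.det • !![(α : ℚ_[p]), 0; 0, 1]) :
    ∃ lam : ℚ_[p], lam ≠ 0 ∧ (∀ i j, ‖(lam • g) i j‖ ≤ 1) ∧ ‖(lam • g).det‖ = 1 := by
  have hα : ‖(α : ℚ_[p])‖ = 1 := by
    rw [PadicInt.padic_norm_e_of_padicInt]
    exact PadicInt.isUnit_iff.mp hu
  have h00 := congrFun (congrFun hstab 0) 0
  have h11 := congrFun (congrFun hstab 1) 1
  simp [Matrix.mul_apply, Fin.sum_univ_two, Matrix.det_fin_two] at h00 h11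
  have e1 : (α:ℚ_[p]) * (g 0 0)^2 + (g 0 1)^2 = g.det * α := by
    rw [Matrix.det_fin_two]; linear_combination h00
  have e2 : (α:ℚ_[p]) * (g 1 0)^2 + (g 1 1)^2 = g.det := by
    rw [Matrix.det_fin_two]; linear_combination h11
  have k1 := key p hp α hu hns (g 0 0) (g 0 1)
  have k2 := key p hp α hu hns (g 1 0) (g 1 1)
  rw [e1] at k1
  rw [e2] at k2
  rw [norm_mul, hα, mul_one] at k1
  set M : ℝ := max ‖g 1 0‖ ‖g 1 1‖ with hM
  set M' : ℝ := max ‖g 0 0‖ ‖g 0 1‖ with hM'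
  have hdet0 : g.det ≠ 0 := hg.ne_zero
  have hMpos : 0 < M := by
    have : (0:ℝ) < ‖g.det‖ := by simpa [norm_pos_iff] using hdet0
    rw [k2] at this
    have hMn : (0:ℝ) ≤ M := le_max_of_le_left (norm_nonneg _)
    nlinarith
  have hMM' : M' = M := by
    have hsq : M'^2 = M^2 := by rw [← k1, ← k2]
    have h1 : 0 ≤ M' := le_max_iff.mpr (Or.inl (norm_nonneg _))
    nlinarith
  -- choose m with ‖m‖ = M
  have hm : ∃ m : ℚ_[p], ‖m‖ = M := by
    rcases le_total ‖g 1 1‖ ‖g 1 0‖ with h | h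
    · exact ⟨g 1 0, (max_eq_left h).symm⟩
    · exact ⟨g 1 1, (max_eq_right h).symm⟩
  obtain ⟨m, hmn⟩ := hm
  have hm0 : m ≠ 0 := by
    intro h; rw [h, norm_zero] at hmn; linarith
  refine ⟨m⁻¹, inv_ne_zero hm0, ?_, ?_⟩
  · intro i j
    have hij : ‖g i j‖ ≤ M := by
      fin_cases i <;> fin_cases j
      · exact le_of_le_of_eq (le_max_left _ _) hMM'
      · exact le_of_le_of_eq (le_max_right _ _) hMM'
      · exact le_max_left _ _
      · exact le_max_right _ _
    rw [Matrix.smul_apply, smul_eq_mul, norm_mul, norm_inv, hmn]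
    rw [inv_mul_le_iff₀ hMpos, mul_one]
    exact hij
  · rw [Matrix.det_smul, norm_mul, norm_pow, norm_inv, hmn]
    have : ‖g.det‖ = M^2 := k2.symm ▸ rfl
    rw [Fintype.card_fin]
    rw [this]
    field_simp
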